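/- Let S = S_c ⊔ S_a be an SC set with m = |S|, let N ≥ 0 be an integer, and let σ ∈ D(S, N) additionally satisfy condition (III). Then the subspace of Conf(S) consisting of all configurations p satisfying conditions (C1), (C2) and (C3) is a contractible topological space. -/

import Mathlib

/-- The configuration space `Conf S`: the set of injective maps (configurations)
`p : S → ℝ × ℝ`, as a subset of the product space `S → ℝ × ℝ`. -/
def Conf (S : Type*) : Set (S → ℝ × ℝ) := {p | Function.Injective p}

/-- Condition (I) on a surjection `σ`: consecutive values are distinct. -/
def CondI {S : Type*} {k : ℕ} (σ : Fin k → S) : Prop :=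
  ∀ i j : Fin k, (j : ℕ) = (i : ℕ) + 1 → σ i ≠ σ j

/-- Condition (II): no interleaving pattern `i₁ < j₁ < i₂ < j₂` with
`i₁, i₂ ∈ σ⁻¹(s)` and `j₁, j₂ ∈ σ⁻¹(s')` for `s ≠ s'`. -/
def CondII {S : Type*} {k : ℕ} (σ : Fin k → S) : Prop :=
  ¬ ∃ (s s' : S) (i₁ j₁ i₂ j₂ : Fin k),
      s ≠ s' ∧ i₁ < j₁ ∧ j₁ < i₂ ∧ i₂ < j₂ ∧
      σ i₁ = s ∧ σ i₂ = s ∧ σ j₁ = s' ∧ σ j₂ = s'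

/-- `σ ∈ D(S, N)`: a surjection `σ : {1, …, N + |S|} → S` satisfying (I) and (II).
(The condition `k = N + |S|` is imposed as a separate hypothesis in the theorems.) -/
def MemD {S : Type*} {k : ℕ} (σ : Fin k → S) : Prop :=
  Function.Surjective σ ∧ CondI σ ∧ CondII σ

/-- Condition (C1) on a configuration `p`: if some element of `σ⁻¹(s)` lies strictly
between two elements of `σ⁻¹(s')` (for `s ≠ s'`) then `x_s < x_{s'}`. -/
def CondC1 {S : Type*} {k : ℕ} (σ : Fin k → S) (p : S → ℝ × ℝ) : Prop :=
  ∀ s s' : S, s ≠ s' →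
    (∃ i j₁ j₂ : Fin k, σ i = s ∧ σ j₁ = s' ∧ σ j₂ = s' ∧ j₁ < i ∧ i < j₂) →
    (p s).1 < (p s').1

/-- Condition (C2) on a configuration `p`: if `x_s = x_{s'}` (for `s ≠ s'`) and every
element of `σ⁻¹(s)` is smaller than every element of `σ⁻¹(s')` then `y_s < y_{s'}`. -/
def CondC2 {S : Type*} {k : ℕ} (σ : Fin k → S) (p : S → ℝ × ℝ) : Prop :=
  ∀ s s' : S, s ≠ s' → (p s).1 = (p s').1 →
    (∀ i j : Fin k, σ i = s → σ j = s' → i < j) →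
    (p s).2 < (p s').2

/-- Condition (C3) for an SC set `S = S_c ⊔ S_a` (here `Sa ⊆ S` and `S_c = Saᶜ`):
`x_s = 0` for `s ∈ S_a` and `x_s > 0` for `s ∈ S_c`. -/
def CondC3 {S : Type*} (Sa : Set S) (p : S → ℝ × ℝ) : Prop :=
  (∀ s ∈ Sa, (p s).1 = 0) ∧ (∀ s ∉ Sa, 0 < (p s).1)

/-- Condition (III): `σ⁻¹(s)` is a one-element set for every `s ∈ S_a`. -/
def CondIII {S : Type*} {k : ℕ} (Sa : Set S) (σ : Fin k → S) : Prop :=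
  ∀ s ∈ Sa, ∃! i : Fin k, σ i = s

section Aux
set_option linter.unusedSectionVars false

variable {S : Type*} {k : ℕ}

/-- `s` is nested inside `s'`: some element of `σ⁻¹(s)` lies strictly between
two elements of `σ⁻¹(s')`. -/
def Nested (σ : Fin k → S) (s s' : S) : Prop :=
  ∃ i j₁ j₂ : Fin k, σ i = s ∧ σ j₁ = s' ∧ σ j₂ = s' ∧ j₁ < i ∧ i < j₂

/-- `Before σ s s'`: every element of `σ⁻¹(s)` precedes every element of `σ⁻¹(s')`. -/
def Before (σ : Fin k → S) (s s' : S) : Prop :=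
  ∀ i j : Fin k, σ i = s → σ j = s' → i < j

lemma between {σ : Fin k → S} (hII : CondII σ) {s s' : S} (hne : s ≠ s')
    (h : Nested σ s s') {i : Fin k} (hi : σ i = s) :
    (∃ a, σ a = s' ∧ a < i) ∧ (∃ b, σ b = s' ∧ i < b) := by
  obtain ⟨i0, j1, j2, h0, h1, h2, hlt1, hlt2⟩ := h
  constructor
  · by_cases hc : j1 < i
    · exact ⟨j1, h1, hc⟩
    · exfalso
      have hij : i < j1 := lt_of_le_of_ne (not_lt.mp hc)
        (fun he => hne (by rw [← hi, he, h1]))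
      exact hII ⟨s, s', i, j1, i0, j2, hne, hij, hlt1, hlt2, hi, h0, h1, h2⟩
  · by_cases hc : i < j2
    · exact ⟨j2, h2, hc⟩
    · exfalso
      have hij : j2 < i := lt_of_le_of_ne (not_lt.mp hc)
        (fun he => hne (by rw [← hi, ← he, h2]))
      exact hII ⟨s', s, j1, i0, j2, i, hne.symm, hlt1, hlt2, hij, h1, h2, h0, hi⟩

lemma nested_antisymm {σ : Fin k → S} (hII : CondII σ) {s s' : S} (hne : s ≠ s')
    (h : Nested σ s s') (h' : Nested σ s' s) : False := by
  have key : ∀ n : ℕ, ∀ i : Fin k, (i : ℕ) < n → σ i ≠ s := by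
    intro n
    induction n with
    | zero => intro i hi; omega
    | succ n ih =>
      intro i hi his
      obtain ⟨⟨a, ha, hai⟩, -⟩ := between hII hne h his
      obtain ⟨⟨b, hb, hba⟩, -⟩ := between hII hne.symm h' ha
      exact ih b (by omega) hb
  obtain ⟨i, -, -, hi, -⟩ := h
  exact key ((i : ℕ) + 1) i (by omega) hi

lemma nested_trans {σ : Fin k → S} (hII : CondII σ) {s s' s'' : S}
    (h1 : s ≠ s') (h2 : s' ≠ s'')
    (n1 : Nested σ s s') (n2 : Nested σ s' s'') : Nested σ s s'' := by
  obtain ⟨i, -, -, hi, -⟩ := id n1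
  obtain ⟨⟨a, ha, hai⟩, ⟨b, hb, hib⟩⟩ := between hII h1 n1 hi
  obtain ⟨⟨a', ha', haa⟩, -⟩ := between hII h2 n2 ha
  obtain ⟨-, ⟨b', hb', hbb⟩⟩ := between hII h2 n2 hb
  exact ⟨i, a', b', hi, ha', hb', lt_trans haa hai, lt_trans hib hbb⟩

lemma trichotomy {σ : Fin k → S} (hII : CondII σ) {s s' : S} (hne : s ≠ s')
    (h1 : ¬ Nested σ s s') (h2 : ¬ Nested σ s' s) :
    Before σ s s' ∨ Before σ s' s := by
  by_contra hcon
  push_neg at hcon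
  obtain ⟨hb1, hb2⟩ := hcon
  simp only [Before, not_forall] at hb1 hb2
  obtain ⟨i, j, hi, hj, hij⟩ := hb1
  obtain ⟨i', j', hi', hj', hij'⟩ := hb2
  have hji : j < i := lt_of_le_of_ne (not_lt.mp hij)
    (by intro he; apply hne; rw [← hi, ← he]; exact hj)
  have hji' : j' < i' := lt_of_le_of_ne (not_lt.mp hij')
    (by intro he; apply hne; rw [← hj', he]; exact hi')
  rcases lt_trichotomy j j' with hlt | heq | hlt
  · exact h1 ⟨j', j, i', hj', hj, hi', hlt, hji'⟩
  · exact hne (by rw [← hj', ← heq]; exact hj)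
  · exact h2 ⟨j, j', i, hj, hj', hi, hlt, hji⟩

variable [Fintype S]

/-- The depth of `s`: the number of elements `s` is (properly) nested inside. -/
noncomputable def depth (σ : Fin k → S) (s : S) : ℕ :=
  {u | u ≠ s ∧ Nested σ s u}.ncard

lemma depth_le (σ : Fin k → S) (s : S) : depth σ s ≤ Fintype.card S := by
  have := Set.ncard_le_ncard (Set.subset_univ {u | u ≠ s ∧ Nested σ s u})
    Set.finite_univ
  simpa [depth, Set.ncard_univ, Nat.card_eq_fintype_card] using this

lemma depth_lt {σ : Fin k → S} (hII : CondII σ) {s s' : S} (hne : s ≠ s')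
    (h : Nested σ s s') : depth σ s' < depth σ s := by
  apply Set.ncard_lt_ncard _ (Set.toFinite _)
  constructor
  · rintro u ⟨hu1, hu2⟩
    refine ⟨?_, nested_trans hII hne hu1.symm h hu2⟩
    rintro rfl
    exact nested_antisymm hII hne h hu2
  · intro hsub
    have hmem : s' ∈ {u | u ≠ s ∧ Nested σ s u} := ⟨hne.symm, h⟩
    exact (hsub hmem).1 rfl

/-- First index of `s` in `σ`. -/
noncomputable def fmin (σ : Fin k → S) (s : S) : ℕ :=
  sInf {n | ∃ i : Fin k, σ i = s ∧ (i : ℕ) = n}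

lemma fmin_mem {σ : Fin k → S} (hs : Function.Surjective σ) (s : S) :
    ∃ i : Fin k, σ i = s ∧ (i : ℕ) = fmin σ s := by
  obtain ⟨i, hi⟩ := hs s
  exact Nat.sInf_mem (⟨(i : ℕ), i, hi, rfl⟩ : {n | ∃ i : Fin k, σ i = s ∧ (i : ℕ) = n}.Nonempty)

lemma fmin_lt {σ : Fin k → S} (hs : Function.Surjective σ) {s s' : S}
    (h : Before σ s s') : fmin σ s < fmin σ s' := by
  obtain ⟨i, hi, hieq⟩ := fmin_mem hs s
  obtain ⟨j, hj, hjeq⟩ := fmin_mem hs s'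
  rw [← hieq, ← hjeq]
  exact_mod_cast h i j hi hj

lemma fmin_inj {σ : Fin k → S} (hs : Function.Surjective σ) {s s' : S}
    (h : fmin σ s = fmin σ s') : s = s' := by
  obtain ⟨i, hi, hieq⟩ := fmin_mem hs s
  obtain ⟨j, hj, hjeq⟩ := fmin_mem hs s'
  have : i = j := Fin.ext (by omega)
  rw [← hi, this, hj]

open Classical in
/-- The canonical `x`-coordinate. -/
noncomputable def xstar (Sa : Set S) (σ : Fin k → S) (s : S) : ℝ :=
  if s ∈ Sa then 0 else (Fintype.card S : ℝ) + 1 - (depth σ s : ℝ)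

lemma xstar_zero {Sa : Set S} {σ : Fin k → S} {s : S} (hs : s ∈ Sa) :
    xstar Sa σ s = 0 := by simp [xstar, hs]

lemma xstar_pos {Sa : Set S} {σ : Fin k → S} {s : S} (hs : s ∉ Sa) :
    0 < xstar Sa σ s := by
  rw [xstar]
  rw [if_neg hs]
  have := depth_le σ s
  have : (depth σ s : ℝ) ≤ (Fintype.card S : ℝ) := by exact_mod_cast this
  linarith

lemma xstar_lt {Sa : Set S} {σ : Fin k → S} (hII : CondII σ) (hIII : CondIII Sa σ)
    {s s' : S} (hne : s ≠ s') (h : Nested σ s s') :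
    xstar Sa σ s < xstar Sa σ s' := by
  have hs' : s' ∉ Sa := by
    intro hmem
    obtain ⟨i0, hu⟩ := hIII s' hmem
    obtain ⟨i, j1, j2, hi, hj1, hj2, hlt1, hlt2⟩ := h
    have e1 := hu.2 j1 hj1
    have e2 := hu.2 j2 hj2
    rw [e1, ← e2] at hlt1
    exact absurd (lt_trans hlt1 hlt2) (lt_irrefl _)
  simp only [xstar, if_neg hs']
  by_cases hs : s ∈ Sa
  · rw [if_pos hs]
    have := depth_le σ s'
    have : (depth σ s' : ℝ) ≤ (Fintype.card S : ℝ) := by exact_mod_cast this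
    linarith
  · rw [if_neg hs]
    have := depth_lt hII hne h
    have : (depth σ s' : ℝ) < (depth σ s : ℝ) := by exact_mod_cast this
    linarith

/-- Strict convexity helper. -/
lemma convex_strict {u a b a' b' : ℝ} (hu0 : 0 ≤ u) (hu1 : u ≤ 1)
    (ha : a < a') (hb : b < b') : (1 - u) * a + u * b < (1 - u) * a' + u * b' := by
  rcases hu0.eq_or_lt with rfl | hu
  · simpa using ha
  · nlinarith

/-- The deformation map. -/
noncomputable def qmap (Sa : Set S) (σ : Fin k → S) (p : S → ℝ × ℝ) (u v : ℝ) :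
    S → ℝ × ℝ :=
  fun s => ((1 - v) * (p s).1 + v * xstar Sa σ s,
            (1 - u) * (p s).2 + u * (fmin σ s : ℝ))

/-- The basepoint. -/
noncomputable def basept (Sa : Set S) (σ : Fin k → S) : S → ℝ × ℝ :=
  fun s => (xstar Sa σ s, (fmin σ s : ℝ))

lemma mem_base {Sa : Set S} {σ : Fin k → S} (hσ : MemD σ) (hIII : CondIII Sa σ) :
    basept Sa σ ∈ Conf S ∧ CondC1 σ (basept Sa σ) ∧ CondC2 σ (basept Sa σ) ∧
      CondC3 Sa (basept Sa σ) := by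
  obtain ⟨hsurj, hI, hII⟩ := hσ
  refine ⟨?_, ?_, ?_, ?_, ?_⟩
  · intro s s' h
    have h2 : ((fmin σ s : ℝ)) = (fmin σ s' : ℝ) := congrArg Prod.snd h
    exact fmin_inj hsurj (by exact_mod_cast h2)
  · intro s s' hne hnested
    exact xstar_lt hII hIII hne hnested
  · intro s s' hne hx hbef
    show ((fmin σ s : ℝ)) < (fmin σ s' : ℝ)
    exact_mod_cast fmin_lt hsurj hbef
  · intro s hs; exact xstar_zero hs
  · intro s hs; exact xstar_pos hs

lemma mem_main {Sa : Set S} {σ : Fin k → S} (hσ : MemD σ) (hIII : CondIII Sa σ)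
    {p : S → ℝ × ℝ}
    (hp : p ∈ Conf S ∧ CondC1 σ p ∧ CondC2 σ p ∧ CondC3 Sa p)
    {u v : ℝ} (hu0 : 0 ≤ u) (hu1 : u ≤ 1) (hv0 : 0 ≤ v) (hv1 : v ≤ 1)
    (huv : 0 < v → u = 1) :
    qmap Sa σ p u v ∈ Conf S ∧ CondC1 σ (qmap Sa σ p u v) ∧
      CondC2 σ (qmap Sa σ p u v) ∧ CondC3 Sa (qmap Sa σ p u v) := by
  obtain ⟨hsurj, hI, hII⟩ := hσ
  obtain ⟨hinj, hC1, hC2, hC3⟩ := hp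
  set q := qmap Sa σ p u v with hq
  -- fact1 : nested pairs get strict x inequality
  have fact1 : ∀ s s' : S, s ≠ s' → Nested σ s s' → (q s).1 < (q s').1 := by
    intro s s' hne hn
    exact convex_strict hv0 hv1 (hC1 s s' hne hn) (xstar_lt hII hIII hne hn)
  -- fact2 : equal q-x plus Before gives strict q-y inequality
  have fact2 : ∀ s s' : S, s ≠ s' → (q s).1 = (q s').1 → Before σ s s' →
      (q s).2 < (q s').2 := by
    intro s s' hne hx hbef
    have hY : (fmin σ s : ℝ) < (fmin σ s' : ℝ) := by
      exact_mod_cast fmin_lt hsurj hbef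
    by_cases hpx : (p s).1 = (p s').1
    · exact convex_strict hu0 hu1 (hC2 s s' hne hpx hbef) hY
    · have hvpos : 0 < v := by
        rcases hv0.eq_or_lt with rfl | h
        · exfalso
          apply hpx
          simpa [hq, qmap] using hx
        · exact h
      have hu : u = 1 := huv hvpos
      simp only [hq, qmap, hu]
      linarith
  -- fact3 : equal q-x forces Before one way or the other
  have fact3 : ∀ s s' : S, s ≠ s' → (q s).1 = (q s').1 →
      Before σ s s' ∨ Before σ s' s := by
    intro s s' hne hx
    apply trichotomy hII hne
    · intro hn; exact absurd hx (ne_of_lt (fact1 s s' hne hn))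
    · intro hn; exact absurd hx.symm (ne_of_lt (fact1 s' s hne.symm hn))
  refine ⟨?_, ?_, ?_, ?_, ?_⟩
  · -- injectivity
    intro s s' h
    by_contra hne
    have hx : (q s).1 = (q s').1 := congrArg Prod.fst h
    have hy : (q s).2 = (q s').2 := congrArg Prod.snd h
    rcases fact3 s s' hne hx with hbef | hbef
    · exact absurd hy (ne_of_lt (fact2 s s' hne hx hbef))
    · exact absurd hy.symm (ne_of_lt (fact2 s' s (Ne.symm hne) hx.symm hbef))
  · intro s s' hne hn
    exact fact1 s s' hne hn
  · intro s s' hne hx hbef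
    exact fact2 s s' hne hx hbef
  · intro s hs
    have h0 := hC3.1 s hs
    simp [hq, qmap, h0, xstar_zero hs]
  · intro s hs
    have := convex_strict hv0 hv1 (hC3.2 s hs) (xstar_pos (σ := σ) hs)
    simpa [hq, qmap] using this

end Aux

/-- For an SC set `S = S_c ⊔ S_a`, `N ≥ 0` and `σ ∈ D(S, N)`
satisfying (III), the subspace of `Conf(S)` of configurations satisfying (C1), (C2)
and (C3) is contractible. -/
theorem statement1 {S : Type*} [Fintype S] (Sa : Set S) (N k : ℕ)
    (hk : k = N + Fintype.card S) (σ : Fin k → S) (hσ : MemD σ)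
    (hIII : CondIII Sa σ) :
    ContractibleSpace
      {p : S → ℝ × ℝ //
        p ∈ Conf S ∧ CondC1 σ p ∧ CondC2 σ p ∧ CondC3 Sa p} := by
  rw [contractible_iff_id_nullhomotopic]
  refine ⟨⟨basept Sa σ, mem_base hσ hIII⟩, ⟨?_⟩⟩
  have hmem : ∀ (t : unitInterval) (x : {p : S → ℝ × ℝ //
      p ∈ Conf S ∧ CondC1 σ p ∧ CondC2 σ p ∧ CondC3 Sa p}),
      qmap Sa σ x.1 (min (2 * (t : ℝ)) 1) (max (2 * (t : ℝ) - 1) 0) ∈ Conf S ∧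
        CondC1 σ (qmap Sa σ x.1 (min (2 * (t : ℝ)) 1) (max (2 * (t : ℝ) - 1) 0)) ∧
        CondC2 σ (qmap Sa σ x.1 (min (2 * (t : ℝ)) 1) (max (2 * (t : ℝ) - 1) 0)) ∧
        CondC3 Sa (qmap Sa σ x.1 (min (2 * (t : ℝ)) 1) (max (2 * (t : ℝ) - 1) 0)) := by
    intro t x
    have ht0 : (0 : ℝ) ≤ (t : ℝ) := t.2.1
    have ht1 : (t : ℝ) ≤ 1 := t.2.2
    refine mem_main hσ hIII x.2 (le_min (by linarith) zero_le_one)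
      (min_le_right _ _) (le_max_right _ _)
      (max_le (by linarith) zero_le_one) ?_
    intro hv
    have h1 : 1 ≤ 2 * (t : ℝ) := by
      by_contra hcon
      push_neg at hcon
      have : max (2 * (t : ℝ) - 1) 0 = 0 := max_eq_right (by linarith)
      rw [this] at hv
      exact lt_irrefl _ hv
    exact min_eq_right h1
  refine ⟨⟨fun tx => ⟨_, hmem tx.1 tx.2⟩, ?_⟩, ?_, ?_⟩
  · -- continuity
    apply Continuous.subtype_mk
    apply continuous_pi
    intro s
    have ht : Continuous fun tx : (unitInterval × {p : S → ℝ × ℝ //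
        p ∈ Conf S ∧ CondC1 σ p ∧ CondC2 σ p ∧ CondC3 Sa p}) => ((tx.1 : ℝ)) :=
      continuous_subtype_val.comp continuous_fst
    have hpx : Continuous fun tx : (unitInterval × {p : S → ℝ × ℝ //
        p ∈ Conf S ∧ CondC1 σ p ∧ CondC2 σ p ∧ CondC3 Sa p}) => ((tx.2 : S → ℝ × ℝ) s) :=
      (continuous_apply s).comp (continuous_subtype_val.comp continuous_snd)
    have hu : Continuous fun tx : (unitInterval × {p : S → ℝ × ℝ //
        p ∈ Conf S ∧ CondC1 σ p ∧ CondC2 σ p ∧ CondC3 Sa p}) =>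
        min (2 * (tx.1 : ℝ)) 1 := (continuous_const.mul ht).min continuous_const
    have hv : Continuous fun tx : (unitInterval × {p : S → ℝ × ℝ //
        p ∈ Conf S ∧ CondC1 σ p ∧ CondC2 σ p ∧ CondC3 Sa p}) =>
        max (2 * (tx.1 : ℝ) - 1) 0 :=
      ((continuous_const.mul ht).sub continuous_const).max continuous_const
    unfold qmap
    apply Continuous.prodMk
    · exact ((continuous_const.sub hv).mul hpx.fst).add (hv.mul continuous_const)
    · exact ((continuous_const.sub hu).mul hpx.snd).add (hu.mul continuous_const)
  · -- map_zero
    intro x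
    apply Subtype.ext
    funext s
    have h0 : ((0 : unitInterval) : ℝ) = 0 := rfl
    have h1 : min (2 * ((0 : unitInterval) : ℝ)) 1 = 0 := by rw [h0]; norm_num
    have h2 : max (2 * ((0 : unitInterval) : ℝ) - 1) 0 = 0 := by rw [h0]; norm_num
    show qmap Sa σ x.1 _ _ s = x.1 s
    rw [h1, h2]
    refine Prod.ext ?_ ?_ <;> simp [qmap]
  · -- map_one
    intro x
    apply Subtype.ext
    funext s
    have h0 : ((1 : unitInterval) : ℝ) = 1 := rfl
    have h1 : min (2 * ((1 : unitInterval) : ℝ)) 1 = 1 := by rw [h0]; norm_num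
    have h2 : max (2 * ((1 : unitInterval) : ℝ) - 1) 0 = 1 := by rw [h0]; norm_num
    show qmap Sa σ x.1 _ _ s = basept Sa σ s
    rw [h1, h2]
    refine Prod.ext ?_ ?_ <;> simp [qmap, basept]
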